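/- arXiv:1812.02637 — 2 statements merged into one kernel-verified Lean document; each statement's English description precedes it below -/
import Mathlib

section
/- Let δ ↦ L(δ) be a continuous real-valued function on ℝⁿ, let ‖·‖ be a norm, let ε ≥ 0 and let ρ be a real number with ρ ≥ L(0) and ρ in the range of L. If the minimum of ‖δ‖ over the set {δ : L(δ) ≥ ρ} equals ε, then the maximum of L(δ) over the closed ball {δ : ‖δ‖ ≤ ε} equals ρ. -/
/-- If the minimum of `‖δ‖` over `{δ | L δ ≥ ρ}` equals `ε`, with `ρ ≥ L 0` and `ρ` in the
range of the continuous function `L`, then the maximum of `L` over the closed ball of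
radius `ε` equals `ρ`. -/
theorem max_on_ball_of_min_norm {E : Type*} [NormedAddCommGroup E] [NormedSpace ℝ E]
    [FiniteDimensional ℝ E] (L : E → ℝ) (hL : Continuous L) (ε ρ : ℝ) (hε : 0 ≤ ε)
    (hρ0 : L 0 ≤ ρ) (hρrange : ρ ∈ Set.range L)
    (hmin : IsLeast ((fun δ => ‖δ‖) '' {δ | ρ ≤ L δ}) ε) :
    IsGreatest (L '' {δ | ‖δ‖ ≤ ε}) ρ := by
  obtain ⟨⟨δ₀, hδ₀, hδ₀n⟩, hlb⟩ := hmin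
  constructor
  · -- membership via IVT on segment from 0 to δ₀
    have hcont : ContinuousOn (fun t : ℝ => L (t • δ₀)) (Set.Icc 0 1) :=
      (hL.comp (continuous_id.smul continuous_const)).continuousOn
    have h01 : (0:ℝ) ≤ 1 := zero_le_one
    have := intermediate_value_Icc h01 hcont
    have hρmem : ρ ∈ Set.Icc (L ((0:ℝ) • δ₀)) (L ((1:ℝ) • δ₀)) := by
      simp only [zero_smul, one_smul]
      exact ⟨hρ0, hδ₀⟩
    obtain ⟨t, ht, htρ⟩ := this hρmem
    refine ⟨t • δ₀, ?_, htρ⟩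
    have : ‖t • δ₀‖ = |t| * ‖δ₀‖ := norm_smul t δ₀
    rw [Set.mem_setOf_eq, this, abs_of_nonneg ht.1]
    simp only at hδ₀n
    rw [hδ₀n]
    calc t * ε ≤ 1 * ε := by nlinarith [ht.2]
    _ = ε := one_mul ε
  · -- upper bound
    rintro y ⟨δ, hδ, rfl⟩
    by_contra h
    push_neg at h
    have hδne : ‖δ‖ ≤ ε := hδ
    -- case ε = 0
    rcases eq_or_lt_of_le hε with hε0 | hεpos
    · have : δ = 0 := by
        have : ‖δ‖ ≤ 0 := by rw [hε0]; exact hδne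
        simpa [norm_le_zero_iff] using this
      rw [this] at h; linarith
    · -- find t < 1 with L (t • δ) > ρ
      have hc : Continuous (fun t : ℝ => L (t • δ)) :=
        hL.comp (continuous_id.smul continuous_const)
      have hopen : IsOpen {t : ℝ | ρ < L (t • δ)} := isOpen_lt continuous_const hc
      have h1 : (1:ℝ) ∈ {t : ℝ | ρ < L (t • δ)} := by simpa using h
      obtain ⟨u, hu, hsub⟩ := Metric.isOpen_iff.mp hopen 1 h1
      set t : ℝ := max (1/2) (1 - u/2) with htdef
      have ht1 : t < 1 := by
        apply max_lt
        · norm_num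
        · linarith
      have ht0 : 0 < t := lt_of_lt_of_le (by norm_num) (le_max_left _ _)
      have htmem : t ∈ Metric.ball (1:ℝ) u := by
        rw [Metric.mem_ball, Real.dist_eq, abs_of_nonpos (by linarith)]
        have : 1 - u/2 ≤ t := le_max_right _ _
        linarith
      have hLt : ρ < L (t • δ) := hsub htmem
      have : ε ≤ ‖t • δ‖ := hlb ⟨t • δ, le_of_lt hLt, rfl⟩
      rw [norm_smul, Real.norm_eq_abs, abs_of_pos ht0] at this
      nlinarith [hδne]
end

section
/- Let L(·,θ) : ℝⁿ → ℝ be continuous, d_θ = min{‖δ‖ : L(δ,θ) ≥ 0} attained, and 0 ≤ ε < d_θ. Then ρ* := max_{‖δ‖≤ε} L(δ,θ) ≤ 0, and ε*_θ(ρ*) := min{‖δ‖ : L(δ,θ) ≥ ρ*} ≤ d_θ (the quantity maximized by adversarial training at this ε is a lower bound of the margin). -/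
/-- For `0 ≤ ε <` margin `d`: the maximum `ρ*` of `L` over the `ε`-ball is `≤ 0`, and the
minimal norm achieving loss `≥ ρ*` is at most `d` (a lower bound of the margin). -/
theorem adv_training_small_eps_lower_bound {E : Type*} [NormedAddCommGroup E]
    [NormedSpace ℝ E] [FiniteDimensional ℝ E] (L : E → ℝ) (hL : Continuous L)
    (d ε ρstar estar : ℝ)
    (hd : IsLeast ((fun δ => ‖δ‖) '' {δ | 0 ≤ L δ}) d)
    (hε0 : 0 ≤ ε) (hεd : ε < d)
    (hmax : IsGreatest (L '' {δ | ‖δ‖ ≤ ε}) ρstar)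
    (hmin : IsLeast ((fun δ => ‖δ‖) '' {δ | ρstar ≤ L δ}) estar) :
    ρstar ≤ 0 ∧ estar ≤ d := by
  obtain ⟨⟨δ0, hδ0, hδ0L⟩, _⟩ := hmax
  have hρ : ρstar ≤ 0 := by
    by_contra h
    push_neg at h
    have : 0 ≤ L δ0 := by rw [hδ0L]; exact h.le
    have hd' := hd.2 ⟨δ0, this, rfl⟩
    exact absurd (hd'.trans hδ0) (not_le.mpr hεd)
  refine ⟨hρ, ?_⟩
  obtain ⟨⟨δd, hδd, hδdn⟩, _⟩ := hd
  have : ρstar ≤ L δd := hρ.trans hδd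
  calc estar ≤ ‖δd‖ := hmin.2 ⟨δd, this, rfl⟩
    _ = d := hδdn
end
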